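/- Every group that admits a left-invariant order which is recurrent for every cyclic subgroup is locally indicable. -/

import Mathlib

/-- `r` is a left-invariant (strict total) order on the group `Γ`. -/
def IsLeftInvariantOrder {Γ : Type*} [Group Γ] (r : Γ → Γ → Prop) : Prop :=
  (∀ a, ¬ r a a) ∧ (∀ a b c, r a b → r b c → r a c) ∧
  (∀ a b, a ≠ b → r a b ∨ r b a) ∧ (∀ γ a b, r a b → r (γ * a) (γ * b))

/-- The order `r` is recurrent for every cyclic subgroup: for every `γ` and
every increasing chain `λ₁ ≺ ⋯ ≺ λ_r` there exist arbitrarily large positive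
integers `n` with `λ₁γⁿ ≺ ⋯ ≺ λ_rγⁿ`. -/
def IsRecurrentOrder {Γ : Type*} [Group Γ] (r : Γ → Γ → Prop) : Prop :=
  ∀ (γ : Γ) (k : ℕ) (lam : Fin k → Γ),
    (∀ i j : Fin k, i < j → r (lam i) (lam j)) →
    ∀ N : ℕ, ∃ n : ℕ, N ≤ n ∧ 0 < n ∧
      ∀ i j : Fin k, i < j → r (lam i * γ ^ n) (lam j * γ ^ n)

set_option linter.unusedSectionVars false
namespace RO

variable {G : Type*} [Group G] {r : G → G → Prop}

/-- nonstrict version -/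
def rle (r : G → G → Prop) (a b : G) : Prop := r a b ∨ a = b

/-- cofinal elements -/
def cof (r : G → G → Prop) (x : G) : Prop := ∀ z, ∃ m : ℤ, r z (x ^ m)

/-- pair recurrence -/
def R2 (r : G → G → Prop) : Prop :=
  ∀ (a b γ : G) (N : ℕ), r a b → ∃ n : ℕ, N ≤ n ∧ r (a * γ ^ n) (b * γ ^ n)

section basic
variable (hio : IsLeftInvariantOrder r)
include hio

lemma rirr (a : G) : ¬ r a a := hio.1 a
lemma rtrans {a b c : G} : r a b → r b c → r a c := hio.2.1 a b c
lemma rtot {a b : G} (h : a ≠ b) : r a b ∨ r b a := hio.2.2.1 a b h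
lemma lmul (γ : G) {a b : G} (h : r a b) : r (γ * a) (γ * b) := hio.2.2.2 γ a b h

lemma not_sym {a b : G} (h : r a b) : ¬ r b a := fun h' => hio.1 a (hio.2.1 a b a h h')

lemma lmul_iff (γ : G) {a b : G} : r (γ * a) (γ * b) ↔ r a b := by
  constructor
  · intro h
    have := lmul hio γ⁻¹ h
    simpa [mul_assoc] using this
  · exact lmul hio γ

lemma rne {a b : G} (h : r a b) : a ≠ b := by rintro rfl; exact hio.1 a h

lemma rle_refl (a : G) : rle r a a := Or.inr rfl
lemma rle_of_r {a b : G} (h : r a b) : rle r a b := Or.inl h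

lemma rle_trans {a b c : G} (h : rle r a b) (h' : rle r b c) : rle r a c := by
  rcases h with h | rfl
  · rcases h' with h' | rfl
    · exact Or.inl (rtrans hio h h')
    · exact Or.inl h
  · exact h'

lemma rle_r_trans {a b c : G} (h : rle r a b) (h' : r b c) : r a c := by
  rcases h with h | rfl
  · exact rtrans hio h h'
  · exact h'

lemma r_rle_trans {a b c : G} (h : r a b) (h' : rle r b c) : r a c := by
  rcases h' with h' | rfl
  · exact rtrans hio h h'
  · exact h

lemma lmul_rle (γ : G) {a b : G} (h : rle r a b) : rle r (γ * a) (γ * b) := by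
  rcases h with h | rfl
  · exact Or.inl (lmul hio γ h)
  · exact Or.inr rfl

lemma rle_total (a b : G) : rle r a b ∨ rle r b a := by
  by_cases h : a = b
  · exact Or.inl (Or.inr h)
  · rcases rtot hio h with h' | h'
    · exact Or.inl (Or.inl h')
    · exact Or.inr (Or.inl h')

lemma rle_of_not_r {a b : G} (h : ¬ r a b) : rle r b a := by
  by_cases hab : a = b
  · exact Or.inr hab.symm
  · rcases rtot hio hab with h' | h'
    · exact absurd h' h
    · exact Or.inl h'

lemma not_r_of_rle {a b : G} (h : rle r a b) : ¬ r b a := by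
  rcases h with h | rfl
  · exact not_sym hio h
  · exact rirr hio a

/-- `r a b ↔ 1 ≺ a⁻¹ b` -/
lemma r_iff_pos {a b : G} : r a b ↔ r 1 (a⁻¹ * b) := by
  constructor
  · intro h; have := lmul hio a⁻¹ h; simpa using this
  · intro h; have := lmul hio a h; simpa using this

lemma rle_iff_pos {a b : G} : rle r a b ↔ rle r 1 (a⁻¹ * b) := by
  unfold rle
  rw [r_iff_pos hio]
  constructor
  · rintro (h | rfl); exacts [Or.inl h, Or.inr (by simp)]
  · rintro (h | h); exacts [Or.inl h, Or.inr (by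
      have : a * 1 = a * (a⁻¹ * b) := by rw [← h]
      simpa [mul_assoc] using this)]

lemma pos_inv_iff {a : G} : r a 1 ↔ r 1 a⁻¹ := by
  constructor
  · intro h; have := lmul hio a⁻¹ h; simpa using this
  · intro h; have := lmul hio a h; simpa using this

lemma neg_inv_iff {a : G} : r 1 a ↔ r a⁻¹ 1 := by
  constructor
  · intro h; have := lmul hio a⁻¹ h; simpa using this
  · intro h; have := lmul hio a h; simpa using this

lemma pos_mul {a b : G} (h : r 1 a) (h' : r 1 b) : r 1 (a * b) := by
  have : r a (a * b) := by simpa using lmul hio a h'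
  exact rtrans hio h this

lemma pos_pow_nat {a : G} (h : r 1 a) : ∀ n : ℕ, 0 < n → r 1 (a ^ n) := by
  intro n hn
  induction n with
  | zero => omega
  | succ k ih =>
    rcases Nat.eq_zero_or_pos k with hk | hk
    · subst hk; simpa using h
    · have := pos_mul hio h (ih hk)
      simpa [pow_succ, pow_succ'] using pos_mul hio (ih hk) h

lemma pos_zpow {a : G} (h : r 1 a) {m : ℤ} (hm : 0 < m) : r 1 (a ^ m) := by
  have : a ^ m = a ^ m.toNat := by rw [← zpow_natCast]; congr 1; omega
  rw [this]
  exact pos_pow_nat hio h m.toNat (by omega)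

lemma zpow_lt {a : G} (h : r 1 a) {m n : ℤ} (hmn : m < n) : r (a ^ m) (a ^ n) := by
  have h1 : r 1 (a ^ (n - m)) := pos_zpow hio h (by omega)
  have := lmul hio (a ^ m) h1
  simpa [← zpow_add, mul_one] using this

lemma zpow_le {a : G} (h : r 1 a) {m n : ℤ} (hmn : m ≤ n) : rle r (a ^ m) (a ^ n) := by
  rcases eq_or_lt_of_le hmn with rfl | h'
  · exact rle_refl hio _
  · exact Or.inl (zpow_lt hio h h')

lemma zpow_inj {a : G} (h : r 1 a) {m n : ℤ} (he : a ^ m = a ^ n) : m = n := by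
  by_contra hne
  rcases lt_or_gt_of_ne hne with h' | h'
  · exact rirr hio _ (he ▸ zpow_lt hio h h')
  · exact rirr hio _ (he ▸ zpow_lt hio h h')

lemma npos_zpow {a : G} (h : r a 1) {m : ℤ} (hm : 0 < m) : r (a ^ m) 1 := by
  have h' : r 1 a⁻¹ := (pos_inv_iff hio).mp h
  have := pos_zpow hio h' hm
  rw [inv_zpow] at this
  have := lmul hio (a ^ m) this
  simpa using this

end basic
lemma inv_pow_int (c : G) (n : ℕ) : c⁻¹ ^ n = c ^ (-(n : ℤ)) := by
  rw [← zpow_natCast c⁻¹ n, inv_zpow, ← zpow_neg]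

lemma mul_self_zpow (g : G) (k : ℤ) : g * g ^ k = g ^ (k + 1) := by
  rw [add_comm, zpow_one_add]

section rec
variable (hio : IsLeftInvariantOrder r) (h2 : R2 r)
include hio h2

/-- workhorse: if `1 ≺ c` and `v ⪯ c^k` then `v * c^j` is bounded by a power of `c`. -/
lemma rb {c v : G} (hc : r 1 c) {k : ℤ} (hv : rle r v (c ^ k)) (j : ℤ) :
    ∃ K : ℤ, r (v * c ^ j) (c ^ K) := by
  rcases hv with hv | rfl
  · obtain ⟨n, hn, hrec⟩ := h2 v (c ^ k) c (j.toNat + 1) hv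
    have hjn : j ≤ (n : ℤ) := by omega
    have h1 : rle r (v * c ^ j) (v * c ^ (n : ℤ)) :=
      lmul_rle hio v (zpow_le hio hc hjn)
    have h2' : r (v * c ^ (n : ℤ)) (c ^ (k + n)) := by
      have e : c ^ k * c ^ (n : ℕ) = c ^ (k + n) := by
        rw [← zpow_natCast c n, ← zpow_add]
      rw [← e]
      simpa [zpow_natCast] using hrec
    exact ⟨k + n, rle_r_trans hio h1 h2'⟩
  · refine ⟨k + j + 1, ?_⟩
    have e : c ^ k * c ^ j = c ^ (k + j) := (zpow_add c k j).symm
    rw [e]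
    exact zpow_lt hio hc (by omega)

/-- product of power-bounded elements is power-bounded -/
lemma rb_mul {c v w : G} (hc : r 1 c) {k j : ℤ} (hv : rle r v (c ^ k)) (hw : rle r w (c ^ j)) :
    ∃ K : ℤ, r (v * w) (c ^ K) := by
  obtain ⟨K, hK⟩ := rb hio h2 hc hv j
  rcases hw with hw | rfl
  · exact ⟨K, rtrans hio (lmul hio v hw) hK⟩
  · exact ⟨K, hK⟩

/-- upper bound on `v` gives lower bound on `v⁻¹` -/
lemma flip1 {c v : G} (hc : r 1 c) {k : ℤ} (hv : r v (c ^ k)) : ∃ M : ℤ, r (c ^ M) v⁻¹ := by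
  obtain ⟨n, hn, hrec⟩ := h2 v (c ^ k) c⁻¹ (k.toNat + 1) hv
  have hkn : k - n ≤ 0 := by omega
  rw [inv_pow_int c n] at hrec
  have e2 : c ^ k * c ^ (-(n:ℤ)) = c ^ (k - n) := by rw [← zpow_add]; ring_nf
  rw [e2] at hrec
  have h1 : rle r (c ^ (k - n)) 1 := by
    have := zpow_le hio hc hkn
    simpa using this
  have h2' : r (v * c ^ (-(n : ℤ))) 1 := r_rle_trans hio hrec h1
  have := lmul hio v⁻¹ h2'
  refine ⟨-(n : ℤ), ?_⟩
  simpa [mul_assoc] using this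

/-- lower bound on `v` gives upper bound on `v⁻¹` -/
lemma flip2 {c v : G} (hc : r 1 c) {k : ℤ} (hv : r (c ^ k) v) : ∃ M : ℤ, r v⁻¹ (c ^ M) := by
  obtain ⟨n, hn, hrec⟩ := h2 (c ^ k) v c ((-k).toNat + 1) hv
  have hkn : 0 < k + n := by omega
  have e1 : c ^ k * c ^ n = c ^ (k + n) := by rw [← zpow_natCast c n, ← zpow_add]
  rw [e1] at hrec
  have h1 : r 1 (c ^ (k + n)) := pos_zpow hio hc hkn
  have h2' : r 1 (v * c ^ n) := rtrans hio h1 hrec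
  have := lmul hio v⁻¹ h2'
  refine ⟨(n : ℤ), ?_⟩
  simpa [mul_assoc, zpow_natCast] using this

/-- downward unboundedness of powers of a positive cofinal element -/
lemma down {x : G} (hx : cof r x) (hxp : r 1 x) (w : G) : ∃ j : ℤ, r (x ^ j) w := by
  obtain ⟨t, ht⟩ := hx w⁻¹
  have h1 : r 1 (w * x ^ t) := by
    have := lmul hio w ht; simpa using this
  obtain ⟨n, hn, hrec⟩ := h2 1 (w * x ^ t) x⁻¹ t.toNat h1
  rw [inv_pow_int x n] at hrec
  have e1 : (1 : G) * x ^ (-(n:ℤ)) = x ^ (-(n : ℤ)) := one_mul _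
  have e2 : w * x ^ t * x ^ (-(n:ℤ)) = w * x ^ (t - n) := by
    rw [mul_assoc, ← zpow_add]; ring_nf
  rw [e1, e2] at hrec
  have h3 : rle r (w * x ^ (t - n)) w := by
    have : rle r (x ^ (t - n)) 1 := by
      have := zpow_le hio hxp (show t - (n : ℤ) ≤ 0 by omega)
      simpa using this
    simpa using lmul_rle hio w this
  exact ⟨-(n : ℤ), r_rle_trans hio hrec h3⟩

omit h2 in
lemma not_cof_one : ¬ cof r (1 : G) := by
  intro h
  obtain ⟨m, hm⟩ := h 1
  rw [one_zpow] at hm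
  exact rirr hio 1 hm

omit hio h2 in
lemma cof_inv {x : G} (hx : cof r x) : cof r x⁻¹ := by
  intro z
  obtain ⟨m, hm⟩ := hx z
  exact ⟨-m, by simpa [zpow_neg, inv_zpow] using hm⟩

/-- if `g` is positive cofinal and `g ⪯ v`, `1 ≺ v`, then `v` is cofinal -/
lemma cof_of_ge {g v : G} (hg : cof r g) (hgp : r 1 g) (hvp : r 1 v) (h : rle r g v) :
    cof r v := by
  have key : ∀ n : ℕ, ∃ K : ℤ, r (g ^ (n : ℤ)) (v ^ K) := by
    intro n
    induction n with
    | zero => exact ⟨1, by simpa using hvp⟩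
    | succ k ih =>
      obtain ⟨K, hK⟩ := ih
      have h1 : r (g ^ ((k : ℤ) + 1)) (g * v ^ K) := by
        have := lmul hio g hK
        rwa [mul_self_zpow g (k : ℤ)] at this
      have h2' : rle r g (v ^ (1 : ℤ)) := by simpa using h
      obtain ⟨K', hK'⟩ := rb hio h2 hvp h2' K
      refine ⟨K', ?_⟩
      have := rtrans hio h1 hK'
      have e : ((k + 1 : ℕ) : ℤ) = (k : ℤ) + 1 := by push_cast; ring
      rwa [e]
  intro z
  obtain ⟨m, hm⟩ := hg z
  obtain ⟨K, hK⟩ := key m.toNat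
  have h5 : rle r (g ^ m) (g ^ (m.toNat : ℤ)) := zpow_le hio hgp (by omega)
  exact ⟨K, rtrans hio (r_rle_trans hio hm h5) hK⟩

/-- if `g` is positive cofinal and `v ⪯ g⁻¹` then `v` is cofinal -/
lemma cof_of_le_inv {g v : G} (hg : cof r g) (hgp : r 1 g) (h : rle r v g⁻¹) : cof r v := by
  rcases h with h | rfl
  swap
  · simpa using cof_inv hg
  have hv1 : r v 1 := by
    have hg1 : r g⁻¹ 1 := (neg_inv_iff hio).mp hgp
    exact rtrans hio h hg1
  have hcp : r 1 v⁻¹ := (pos_inv_iff hio).mp hv1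
  have step1 : ∃ j : ℤ, r g (v⁻¹ ^ j) := by
    obtain ⟨n, hn, hrec⟩ := h2 v g⁻¹ v⁻¹ 1 h
    have e1 : v * v⁻¹ ^ n = v⁻¹ ^ ((n : ℤ) - 1) := by
      rw [← zpow_natCast v⁻¹ n]
      group
    rw [e1] at hrec
    have h3 : r (g * v⁻¹ ^ ((n : ℤ) - 1)) (v⁻¹ ^ (n : ℤ)) := by
      have := lmul hio g hrec
      have e2 : g * (g⁻¹ * v⁻¹ ^ n) = v⁻¹ ^ (n : ℤ) := by
        rw [← mul_assoc]
        simp [zpow_natCast]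
      rw [e2] at this
      exact this
    have h4 : rle r g (g * v⁻¹ ^ ((n : ℤ) - 1)) := by
      have : rle r 1 (v⁻¹ ^ ((n : ℤ) - 1)) := by
        have := zpow_le hio hcp (show (0 : ℤ) ≤ (n : ℤ) - 1 by omega)
        simpa using this
      simpa using lmul_rle hio g this
    exact ⟨(n : ℤ), rle_r_trans hio h4 h3⟩
  obtain ⟨j, hj⟩ := step1
  have key : ∀ n : ℕ, ∃ K : ℤ, r (g ^ (n : ℤ)) (v⁻¹ ^ K) := by
    intro n
    induction n with
    | zero => exact ⟨1, by simpa using hcp⟩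
    | succ k ih =>
      obtain ⟨K, hK⟩ := ih
      have h1 : r (g ^ ((k : ℤ) + 1)) (g * v⁻¹ ^ K) := by
        have := lmul hio g hK
        rwa [mul_self_zpow g (k : ℤ)] at this
      obtain ⟨K', hK'⟩ := rb hio h2 hcp (Or.inl hj) K
      refine ⟨K', ?_⟩
      have := rtrans hio h1 hK'
      have e : ((k + 1 : ℕ) : ℤ) = (k : ℤ) + 1 := by push_cast; ring
      rwa [e]
  intro z
  obtain ⟨m, hm⟩ := hg z
  obtain ⟨K, hK⟩ := key m.toNat
  have h5 : rle r (g ^ m) (g ^ (m.toNat : ℤ)) := zpow_le hio hgp (by omega)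
  refine ⟨-K, ?_⟩
  have hzz := rtrans hio (r_rle_trans hio hm h5) hK
  rwa [inv_zpow, ← zpow_neg] at hzz

/-- conjugates of cofinal elements are cofinal -/
lemma cof_conj {x : G} (hx : cof r x) (h : G) : cof r (h * x * h⁻¹) := by
  have core : ∀ y : G, cof r y → r 1 y → cof r (h * y * h⁻¹) := by
    intro y hy hyp z
    obtain ⟨s, hs⟩ := hy (h⁻¹ * z)
    obtain ⟨j, hj⟩ := down hio h2 hy hyp h⁻¹
    refine ⟨s - j, ?_⟩
    have h1 : r (y ^ (-(s - j)) * (h⁻¹ * z)) (y ^ (-(s - j)) * y ^ s) := lmul hio _ hs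
    have e1 : y ^ (-(s - j)) * y ^ s = y ^ j := by rw [← zpow_add]; ring_nf
    rw [e1] at h1
    have h3 : r (y ^ (-(s - j)) * (h⁻¹ * z)) h⁻¹ := rtrans hio h1 hj
    have h4 := lmul hio (y ^ (s - j)) h3
    rw [← mul_assoc, ← zpow_add] at h4
    simp only [add_neg_cancel, zpow_zero, one_mul] at h4
    have h5 := lmul hio h h4
    rw [← mul_assoc] at h5
    simp only [mul_inv_cancel, one_mul] at h5
    rw [conj_zpow, mul_assoc]
    exact h5
  have hx1 : x ≠ 1 := fun hx1 => not_cof_one hio (hx1 ▸ hx)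
  rcases rtot hio hx1 with hneg | hpos
  · have hcc : cof r (h * x⁻¹ * h⁻¹) := core x⁻¹ (cof_inv hx) ((pos_inv_iff hio).mp hneg)
    have e : h * x⁻¹ * h⁻¹ = (h * x * h⁻¹)⁻¹ := by group
    rw [e] at hcc
    simpa using cof_inv hcc
  · exact core x hx hpos

end rec
/-- max of two elements w.r.t. r -/
noncomputable def m2 (r : G → G → Prop) (a b : G) : G :=
  letI := Classical.dec (r a b)
  if r a b then b else a

/-- positive noninfinitesimal elements -/
def posc (r : G → G → Prop) (x : G) : Prop := cof r x ∧ r 1 x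

section csub
variable (hio : IsLeftInvariantOrder r) (h2 : R2 r)
include hio

omit hio in
lemma m2_left (a b : G) : rle r a (m2 r a b) := by
  unfold m2
  split
  · exact Or.inl (by assumption)
  · exact Or.inr rfl

lemma m2_right (a b : G) : rle r b (m2 r a b) := by
  unfold m2
  split
  · exact Or.inr rfl
  · exact rle_of_not_r hio (by assumption)

omit hio in
lemma m2_cases (a b : G) : m2 r a b = a ∨ m2 r a b = b := by
  unfold m2; split; exacts [Or.inr rfl, Or.inl rfl]

lemma not_cof_bdd {x : G} (hx : ¬ cof r x) : ∃ z, ∀ m : ℤ, rle r (x ^ m) z := by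
  unfold cof at hx
  push_neg at hx
  obtain ⟨z, hz⟩ := hx
  exact ⟨z, fun m => rle_of_not_r hio (hz m)⟩

lemma bdd_not_cof {x z : G} (hz : ∀ m : ℤ, rle r (x ^ m) z) : ¬ cof r x := by
  intro hc
  obtain ⟨m, hm⟩ := hc z
  exact rirr hio z (r_rle_trans hio hm (hz m))

lemma eq_one_of_le_one {x : G} (h1 : rle r x 1) (h2' : rle r x⁻¹ 1) : x = 1 := by
  rcases h1 with h1 | h1
  · exfalso
    have : r 1 x⁻¹ := (pos_inv_iff hio).mp h1
    exact rirr hio 1 (r_rle_trans hio this h2')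
  · exact h1

include h2 in
lemma not_cof_mul {x y : G} (hx : ¬ cof r x) (hy : ¬ cof r y) : ¬ cof r (x * y) := by
  obtain ⟨zx, hzx⟩ := not_cof_bdd hio hx
  obtain ⟨zy, hzy⟩ := not_cof_bdd hio hy
  set c := m2 r (m2 r x x⁻¹) (m2 r y y⁻¹) with hc
  have hxc : rle r x c := rle_trans hio (m2_left x x⁻¹) (m2_left _ _)
  have hxic : rle r x⁻¹ c := rle_trans hio (m2_right hio x x⁻¹) (m2_left _ _)
  have hyc : rle r y c := rle_trans hio (m2_left y y⁻¹) (m2_right hio _ _)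
  have hyic : rle r y⁻¹ c := rle_trans hio (m2_right hio y y⁻¹) (m2_right hio _ _)
  have hcbdd : ∀ K : ℤ, rle r (c ^ K) (m2 r zx zy) := by
    intro K
    have hcases : c = x ∨ c = x⁻¹ ∨ c = y ∨ c = y⁻¹ := by
      rcases m2_cases (r := r) (m2 r x x⁻¹) (m2 r y y⁻¹) with h | h
      · rcases m2_cases (r := r) x x⁻¹ with h' | h' <;> rw [hc, h, h']
        · exact Or.inl rfl
        · exact Or.inr (Or.inl rfl)
      · rcases m2_cases (r := r) y y⁻¹ with h' | h' <;> rw [hc, h, h']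
        · exact Or.inr (Or.inr (Or.inl rfl))
        · exact Or.inr (Or.inr (Or.inr rfl))
    rcases hcases with h | h | h | h <;> rw [h]
    · exact rle_trans hio (hzx K) (m2_left _ _)
    · rw [inv_zpow, ← zpow_neg]; exact rle_trans hio (hzx (-K)) (m2_left _ _)
    · exact rle_trans hio (hzy K) (m2_right hio _ _)
    · rw [inv_zpow, ← zpow_neg]; exact rle_trans hio (hzy (-K)) (m2_right hio _ _)
  by_cases hcp : r 1 c
  swap
  · have hc1 : rle r c 1 := rle_of_not_r hio hcp
    have hx1 : x = 1 :=
      eq_one_of_le_one hio (rle_trans hio hxc hc1) (rle_trans hio hxic hc1)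
    have hy1 : y = 1 :=
      eq_one_of_le_one hio (rle_trans hio hyc hc1) (rle_trans hio hyic hc1)
    rw [hx1, hy1, mul_one]
    exact not_cof_one hio
  have key : ∀ (a b : G), rle r a c → rle r b c → ∀ n : ℕ,
      ∃ K : ℤ, rle r ((a * b) ^ n) (c ^ K) := by
    intro a b hac hbc n
    induction n with
    | zero => exact ⟨0, by simpa using rle_refl hio (1 : G)⟩
    | succ k ih =>
      obtain ⟨K, hK⟩ := ih
      have hac' : rle r a (c ^ (1 : ℤ)) := by simpa using hac
      have hbc' : rle r b (c ^ (1 : ℤ)) := by simpa using hbc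
      have hbK : rle r (b * (a * b) ^ k) (b * c ^ K) := lmul_rle hio b hK
      obtain ⟨K', hK'⟩ := rb hio h2 hcp hbc' K
      have h5 : r (b * (a * b) ^ k) (c ^ K') := rle_r_trans hio hbK hK'
      have h6 : r (a * (b * (a * b) ^ k)) (a * c ^ K') := lmul hio a h5
      obtain ⟨K'', hK''⟩ := rb hio h2 hcp hac' K'
      have h7 : r (a * (b * (a * b) ^ k)) (c ^ K'') := rtrans hio h6 hK''
      refine ⟨K'', Or.inl ?_⟩
      have e : (a * b) ^ (k + 1) = a * (b * (a * b) ^ k) := by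
        rw [pow_succ', mul_assoc]
      rw [e]
      exact h7
  have bound : ∀ m : ℤ, ∃ K : ℤ, rle r ((x * y) ^ m) (c ^ K) := by
    intro m
    rcases le_or_gt 0 m with hm | hm
    · obtain ⟨K, hK⟩ := key x y hxc hyc m.toNat
      refine ⟨K, ?_⟩
      have e : (x * y) ^ m = (x * y) ^ (m.toNat : ℕ) := by
        rw [← zpow_natCast]; congr 1; omega
      rwa [e]
    · obtain ⟨K, hK⟩ := key y⁻¹ x⁻¹ hyic hxic (-m).toNat
      refine ⟨K, ?_⟩
      have e : (x * y) ^ m = (y⁻¹ * x⁻¹) ^ ((-m).toNat : ℕ) := by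
        rw [← mul_inv_rev, ← zpow_natCast ((x*y)⁻¹) ((-m).toNat), inv_zpow, ← zpow_neg]
        congr 1; omega
      rwa [e]
  refine bdd_not_cof hio (z := m2 r zx zy) ?_
  intro m
  obtain ⟨K, hK⟩ := bound m
  exact rle_trans hio hK (hcbdd K)

include h2 in
lemma lem_C_lt {w v : G} (hw : cof r w) (hwp : r 1 w) (hv : ¬ cof r v) : r v w := by
  by_cases hvw : v = w
  · exact absurd (hvw ▸ hw) hv
  rcases rtot hio hvw with h | h
  · exact h
  · exfalso
    exact hv (cof_of_ge hio h2 hw hwp (rtrans hio hwp h) (Or.inl h))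

include h2 in
lemma lem_C_gt {w v : G} (hw : cof r w) (hwp : r 1 w) (hv : ¬ cof r v) : r w⁻¹ v := by
  by_cases hvw : v = w⁻¹
  · exact absurd (hvw ▸ cof_inv hw) hv
  rcases rtot hio hvw with h | h
  · exfalso
    exact hv (cof_of_le_inv hio h2 hw hwp (Or.inl h))
  · exact h

include h2 in
lemma posc_mul {a b : G} (ha : posc r a) (hb : posc r b) : posc r (a * b) := by
  refine ⟨?_, pos_mul hio ha.2 hb.2⟩
  by_contra hab
  have hinv : ¬ cof r (b⁻¹ * a⁻¹) := by
    rw [← mul_inv_rev]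
    intro hc
    exact hab (by simpa using cof_inv hc)
  have hgt := lem_C_gt hio h2 hb.1 hb.2 hinv
  have h3 := lmul hio b hgt
  rw [← mul_assoc, mul_inv_cancel, one_mul] at h3
  have h4 : r a 1 := (pos_inv_iff hio).mpr h3
  exact rirr hio 1 (rtrans hio ha.2 h4)

include h2 in
lemma posc_mul_c {w c : G} (hw : posc r w) (hc : ¬ cof r c) : posc r (w * c) := by
  constructor
  · by_contra hcc
    have h1 : ¬ cof r c⁻¹ := fun h => hc (by simpa using cof_inv h)
    have h3 := not_cof_mul hio h2 hcc h1
    rw [mul_assoc, mul_inv_cancel, mul_one] at h3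
    exact h3 hw.1
  · have h3 : r w⁻¹ c := lem_C_gt hio h2 hw.1 hw.2 hc
    have := lmul hio w h3
    simpa using this

end csub

/-- The subgroup of non-cofinal elements. -/
noncomputable def Csub (hio : IsLeftInvariantOrder r) (h2 : R2 r) : Subgroup G where
  carrier := {x | ¬ cof r x}
  one_mem' := not_cof_one hio
  inv_mem' := fun hx hc => hx (by simpa using cof_inv hc)
  mul_mem' := fun hx hy => not_cof_mul hio h2 hx hy

lemma Csub_normal (hio : IsLeftInvariantOrder r) (h2 : R2 r) : (Csub hio h2).Normal := by
  constructor
  intro x hx g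
  intro hc
  apply hx
  have hconj := cof_conj hio h2 hc g⁻¹
  have e : g⁻¹ * (g * x * g⁻¹) * g⁻¹⁻¹ = x := by group
  rwa [e] at hconj

instance Csub_normal_inst (hio : IsLeftInvariantOrder r) (h2 : R2 r) : (Csub hio h2).Normal :=
  Csub_normal hio h2
/-- surjection of a nontrivial f.g. torsion-free commutative group onto ℤ -/
lemma zsurj {A : Type*} [CommGroup A] (hfg : Group.FG A) (hnt : Nontrivial A)
    (htf : ∀ (x : A) (n : ℤ), x ^ n = 1 → n ≠ 0 → x = 1) :
    ∃ φ : A →* Multiplicative ℤ, Function.Surjective φ := by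
  haveI : AddGroup.FG (Additive A) := GroupFG.iff_add_fg.mp hfg
  haveI : Module.Finite ℤ (Additive A) := Module.Finite.iff_addGroup_fg.mpr ‹_›
  haveI : NoZeroSMulDivisors ℤ (Additive A) := by
    constructor
    intro n x h
    by_cases hn : n = 0
    · exact Or.inl hn
    · refine Or.inr ?_
      have : x.toMul ^ n = 1 := by
        rw [← toMul_zsmul, h]; rfl
      have := htf x.toMul n this hn
      exact this
  haveI : Module.Free ℤ (Additive A) := Module.free_of_finite_type_torsion_free'
  set ι := Module.Free.ChooseBasisIndex ℤ (Additive A)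
  let b : Module.Basis ι ℤ (Additive A) := Module.Free.chooseBasis ℤ (Additive A)
  haveI hne : Nonempty ι := by
    by_contra h
    haveI : IsEmpty ι := not_nonempty_iff.mp h
    haveI : Subsingleton (ι →₀ ℤ) := inferInstance
    haveI : Subsingleton (Additive A) := b.repr.toEquiv.subsingleton
    obtain ⟨a, b', hab⟩ := hnt
    exact hab (congrArg Additive.toMul (Subsingleton.elim (Additive.ofMul a) (Additive.ofMul b')))
  obtain ⟨i⟩ := hne
  let ψ : Additive A →ₗ[ℤ] ℤ := b.coord i
  refine ⟨{ toFun := fun a => Multiplicative.ofAdd (ψ (Additive.ofMul a)),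
            map_one' := by simp, map_mul' := ?_ }, ?_⟩
  · intro x y
    simp only [ofMul_mul, map_add]
    rfl
  · intro n
    refine ⟨(n.toAdd • b i).toMul, ?_⟩
    simp only [MonoidHom.coe_mk, OneHom.coe_mk]
    have : ψ (n.toAdd • b i) = n.toAdd := by
      rw [map_smul, Module.Basis.coord_apply, Module.Basis.repr_self]
      simp
    rw [show Additive.ofMul (n.toAdd • b i).toMul = n.toAdd • b i from rfl, this]
    rfl

section top
variable (hio : IsLeftInvariantOrder r) (h2 : R2 r)
include hio h2

/-- the "integer part": greatest m with u^m ⪯ x -/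
lemma pex {u : G} (hu : r 1 u) (hcu : cof r u) (x : G) :
    ∃ m : ℤ, (rle r (u ^ m) x ∧ r x (u ^ (m + 1))) ∧ ∀ k : ℤ, rle r (u ^ k) x → k ≤ m := by
  obtain ⟨K, hK⟩ := hcu x
  have Hbdd : ∃ b : ℤ, ∀ z : ℤ, rle r (u ^ z) x → z ≤ b := by
    refine ⟨K, fun z hz => ?_⟩
    by_contra hzK
    have : r (u ^ K) (u ^ z) := zpow_lt hio hu (by omega)
    exact rirr hio x (r_rle_trans hio (rtrans hio hK this) hz)
  have Hinh : ∃ z : ℤ, rle r (u ^ z) x := by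
    obtain ⟨j, hj⟩ := down hio h2 hcu hu x
    exact ⟨j, Or.inl hj⟩
  obtain ⟨m, hm, hmax⟩ := Int.exists_greatest_of_bdd Hbdd Hinh
  refine ⟨m, ⟨hm, ?_⟩, hmax⟩
  by_contra h
  have := rle_of_not_r hio h
  exact absurd (hmax (m + 1) this) (by omega)

variable (harch : ∀ d : G, r 1 d → cof r d)
include harch

/-- conjugates of positive elements are positive (bi-invariance) -/
lemma conj_pos {d : G} (hd : r 1 d) (γ : G) : r 1 (γ⁻¹ * d * γ) := by
  by_contra hcon
  have hne : γ⁻¹ * d * γ ≠ 1 := by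
    intro h
    have : d = 1 := by
      have := congrArg (fun w => γ * w * γ⁻¹) h
      simpa [mul_assoc] using this
    rw [this] at hd
    exact rirr hio 1 hd
  have he : r (γ⁻¹ * d * γ) 1 := by
    rcases rle_of_not_r hio hcon with h | h
    · exact h
    · exact absurd h hne
  obtain ⟨m, ⟨hm, _⟩, hmax⟩ := pex hio h2 hd (harch d hd) γ
  have h1 : rle r (d ^ (m + 1)) (d * γ) := by
    have := lmul_rle hio d hm
    rwa [mul_self_zpow d m] at this
  have h2'' : r (d * γ) γ := by
    have := lmul hio γ he
    have e : γ * (γ⁻¹ * d * γ) = d * γ := by group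
    rw [e, mul_one] at this
    exact this
  have h3 : rle r (d ^ (m + 1)) γ := Or.inl (rle_r_trans hio h1 h2'')
  exact absurd (hmax (m + 1) h3) (by omega)

/-- right multiplication preserves the order -/
lemma rmul {a b : G} (h : r a b) (γ : G) : r (a * γ) (b * γ) := by
  have hd : r 1 (a⁻¹ * b) := (r_iff_pos hio).mp h
  have := conj_pos hio h2 harch hd γ
  have e : γ⁻¹ * (a⁻¹ * b) * γ = (a * γ)⁻¹ * (b * γ) := by group
  rw [e] at this
  exact (r_iff_pos hio).mpr this

lemma rmul_rle {a b : G} (h : rle r a b) (γ : G) : rle r (a * γ) (b * γ) := by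
  rcases h with h | rfl
  · exact Or.inl (rmul hio h2 harch h γ)
  · exact Or.inr rfl

lemma inv_anti {a b : G} (h : r a b) : r b⁻¹ a⁻¹ := by
  have h1 : r (a * b⁻¹) 1 := by
    have := rmul hio h2 harch h b⁻¹
    simpa using this
  have := lmul hio a⁻¹ h1
  rwa [← mul_assoc, inv_mul_cancel, one_mul, mul_one] at this

lemma inv_anti_rle {a b : G} (h : rle r a b) : rle r b⁻¹ a⁻¹ := by
  rcases h with h | rfl
  · exact Or.inl (inv_anti hio h2 harch h)
  · exact Or.inr rfl

/-- no positive "commutator discrepancy" in the dense case -/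
lemma no_pos_comm (hdense : ∀ u, r 1 u → ∃ w, r 1 w ∧ r w u) (x y : G) :
    ¬ r 1 (x * y * (y * x)⁻¹) := by
  intro hd
  set d := x * y * (y * x)⁻¹ with hdd
  obtain ⟨w, hw, hwd⟩ := hdense d hd
  have hz : ∃ z, r 1 z ∧ rle r (z * z) d := by
    by_cases hww : rle r (w * w) d
    · exact ⟨w, hw, hww⟩
    · have hnr : ¬ r (w * w) d := fun h => hww (Or.inl h)
      have hdww : rle r d (w * w) := rle_of_not_r hio hnr
      have hz1 : r 1 (d * w⁻¹) := by
        have := rmul hio h2 harch hwd w⁻¹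
        simpa using this
      have hz2 : rle r (w⁻¹ * d * w⁻¹) 1 := by
        have t1 : rle r (w⁻¹ * d) w := by
          have := lmul_rle hio w⁻¹ hdww
          rwa [show w⁻¹ * (w * w) = w by group] at this
        have t2 := rmul_rle hio h2 harch t1 w⁻¹
        rwa [mul_inv_cancel] at t2
      refine ⟨d * w⁻¹, hz1, ?_⟩
      have t3 : rle r (d * (w⁻¹ * d * w⁻¹)) (d * 1) := lmul_rle hio d hz2
      rwa [mul_one, show d * (w⁻¹ * d * w⁻¹) = d * w⁻¹ * (d * w⁻¹) by group] at t3
  obtain ⟨z, hzp, hzzd⟩ := hz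
  have hcz := harch z hzp
  obtain ⟨a, ⟨ha, hax⟩, _⟩ := pex hio h2 hzp hcz x
  obtain ⟨b, ⟨hb, hby⟩, _⟩ := pex hio h2 hzp hcz y
  have h1 : r (x * y) (z ^ (a + b + 2)) := by
    have s1 : r (x * y) (x * z ^ (b + 1)) := lmul hio x hby
    have s2 : r (x * z ^ (b + 1)) (z ^ (a + 1) * z ^ (b + 1)) :=
      rmul hio h2 harch hax (z ^ (b + 1))
    have e1 : z ^ (a + 1) * z ^ (b + 1) = z ^ (a + b + 2) := by
      rw [← zpow_add]; ring_nf
    rw [e1] at s2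
    exact rtrans hio s1 s2
  have h2'' : rle r (z ^ (b + a)) (y * x) := by
    have t1 : rle r (z ^ b * z ^ a) (z ^ b * x) := lmul_rle hio (z ^ b) ha
    have t2 : rle r (z ^ b * x) (y * x) := rmul_rle hio h2 harch hb x
    have e2 : z ^ b * z ^ a = z ^ (b + a) := (zpow_add z b a).symm
    rw [e2] at t1
    exact rle_trans hio t1 t2
  have h3 : rle r (y * x)⁻¹ (z ^ (-(b + a))) := by
    have := inv_anti_rle hio h2 harch h2''
    rwa [← zpow_neg] at this
  have h4 : r d (z * z) := by
    have u1 : r (x * y * (y * x)⁻¹) (z ^ (a + b + 2) * (y * x)⁻¹) :=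
      rmul hio h2 harch h1 (y * x)⁻¹
    have u2 : rle r (z ^ (a + b + 2) * (y * x)⁻¹) (z ^ (a + b + 2) * z ^ (-(b + a))) :=
      lmul_rle hio _ h3
    have e3 : z ^ (a + b + 2) * z ^ (-(b + a)) = z * z := by
      rw [← zpow_add]
      have : a + b + 2 + -(b + a) = 2 := by ring
      rw [this, zpow_two]
    rw [e3] at u2
    exact r_rle_trans hio u1 u2
  exact rirr hio d (r_rle_trans hio h4 hzzd)

omit h2 harch in
lemma order_torsion_free (x : G) (n : ℤ) (hx : x ^ n = 1) (hn : n ≠ 0) : x = 1 := by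
  by_contra hx1
  rcases rtot hio hx1 with h | h
  · -- x ≺ 1
    rcases lt_or_gt_of_ne hn with hn' | hn'
    · have := npos_zpow hio h (show (0:ℤ) < -n by omega)
      rw [zpow_neg, hx, inv_one] at this
      exact rirr hio 1 this
    · have := npos_zpow hio h hn'
      rw [hx] at this
      exact rirr hio 1 this
  · -- 1 ≺ x
    rcases lt_or_gt_of_ne hn with hn' | hn'
    · have := pos_zpow hio h (show (0:ℤ) < -n by omega)
      rw [zpow_neg, hx, inv_one] at this
      exact rirr hio 1 this
    · have := pos_zpow hio h hn'
      rw [hx] at this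
      exact rirr hio 1 this

/-- main abstract theorem: a f.g. nontrivial group with a left-invariant,
pair-recurrent order all of whose positive elements are cofinal surjects onto ℤ. -/
theorem top_thm (hfg : Group.FG G) (hnt : Nontrivial G) :
    ∃ φ : G →* Multiplicative ℤ, Function.Surjective φ := by
  by_cases hmin : ∃ u : G, r 1 u ∧ ∀ w, r 1 w → ¬ r w u
  · -- discrete case: G is infinite cyclic
    obtain ⟨u, hu, humin⟩ := hmin
    have hcu := harch u hu
    have key : ∀ x : G, ∃! m : ℤ, x = u ^ m := by
      intro x
      obtain ⟨m, ⟨hm, hlt⟩, _⟩ := pex hio h2 hu hcu x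
      have h1 : rle r 1 (u ^ (-m) * x) := by
        have := lmul_rle hio (u ^ (-m)) hm
        rwa [← zpow_add, neg_add_cancel, zpow_zero] at this
      have h2'' : r (u ^ (-m) * x) u := by
        have := lmul hio (u ^ (-m)) hlt
        rwa [← zpow_add, show -m + (m+1) = 1 by ring, zpow_one] at this
      have hx1 : u ^ (-m) * x = 1 := by
        rcases h1 with h1 | h1
        · exact absurd h2'' (humin _ h1)
        · exact h1.symm
      have hxm : x = u ^ m := by
        have := congrArg (fun w => u ^ m * w) hx1
        simpa [← mul_assoc, ← zpow_add] using this
      exact ⟨m, hxm, fun k hk => zpow_inj hio hu (hk ▸ hxm ▸ rfl : u ^ k = u ^ m)⟩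
    have em : ∀ x : G, ∃ m : ℤ, x = u ^ m ∧ ∀ k : ℤ, x = u ^ k → k = m := by
      intro x
      obtain ⟨m, hm, hu'⟩ := key x
      exact ⟨m, hm, hu'⟩
    choose f hf hfu using em
    refine ⟨MonoidHom.mk' (fun x => Multiplicative.ofAdd (f x)) ?_, ?_⟩
    · intro x y
      have hxy : x * y = u ^ (f x + f y) := by
        rw [zpow_add, ← hf x, ← hf y]
      have := hfu (x * y) (f x + f y) hxy
      show Multiplicative.ofAdd (f (x * y)) = Multiplicative.ofAdd (f x) * Multiplicative.ofAdd (f y)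
      rw [← this]
      rfl
    · intro n
      refine ⟨u ^ n.toAdd, ?_⟩
      have := hfu (u ^ n.toAdd) n.toAdd rfl
      show Multiplicative.ofAdd (f (u ^ n.toAdd)) = n
      rw [← this]
      rfl
  · push_neg at hmin
    have hdense : ∀ u, r 1 u → ∃ w, r 1 w ∧ r w u := by
      intro u hu
      obtain ⟨w, hw, hwu⟩ := hmin u hu
      exact ⟨w, hw, hwu⟩
    have comm : ∀ x y : G, x * y = y * x := by
      intro x y
      by_contra hne
      have hd1 : x * y * (y * x)⁻¹ ≠ 1 := by
        intro h
        exact hne (by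
          have := congrArg (fun w => w * (y * x)) h
          simpa [mul_assoc] using this)
      rcases rtot hio hd1 with h | h
      · -- d ≺ 1, so d⁻¹ = (y*x)*(x*y)⁻¹ ≻ 1
        have : r 1 (y * x * (x * y)⁻¹) := by
          have := (pos_inv_iff hio).mp h
          rwa [show (x * y * (y * x)⁻¹)⁻¹ = y * x * (x * y)⁻¹ by group] at this
        exact no_pos_comm hio h2 harch hdense y x this
      · exact no_pos_comm hio h2 harch hdense x y h
    letI : CommGroup G := { (inferInstance : Group G) with mul_comm := comm }
    exact zsurj hfg hnt (order_torsion_free hio)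

end top
section gen
variable (hio : IsLeftInvariantOrder r) (h2 : R2 r)
include hio

lemma finset_max (T : Finset G) (hT : T.Nonempty) : ∃ c ∈ T, ∀ s ∈ T, rle r s c := by
  classical
  induction T using Finset.induction_on with
  | empty => exact absurd hT (by simp)
  | @insert a T' ha ih =>
    rcases T'.eq_empty_or_nonempty with rfl | hT'
    · exact ⟨a, by simp, by simp [rle_refl hio]⟩
    · obtain ⟨c, hc, hmax⟩ := ih hT'
      refine ⟨m2 r a c, ?_, ?_⟩
      · rcases m2_cases (r := r) a c with h | h <;> rw [h]
        · exact Finset.mem_insert_self a T'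
        · exact Finset.mem_insert_of_mem hc
      · intro s hs
        rcases Finset.mem_insert.mp hs with rfl | hs'
        · exact m2_left s c
        · exact rle_trans hio (hmax s hs') (m2_right hio a c)

include h2 in
/-- in a nontrivial f.g. group there is a positive cofinal element -/
lemma exists_cofinal (hfg : Group.FG G) (hnt : Nontrivial G) : ∃ g : G, posc r g := by
  classical
  obtain ⟨S, hS⟩ := hfg.out
  set T : Finset G := S ∪ S.image (·⁻¹) with hT
  have hTmem : ∀ s ∈ S, s ∈ T ∧ s⁻¹ ∈ T := by
    intro s hs
    constructor
    · exact Finset.mem_union_left _ hs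
    · exact Finset.mem_union_right _ (Finset.mem_image_of_mem _ hs)
  have hSne : S.Nonempty := by
    rcases S.eq_empty_or_nonempty with rfl | h
    · exfalso
      rw [Finset.coe_empty, Subgroup.closure_empty] at hS
      obtain ⟨x, y, hxy⟩ := hnt
      have hx : x ∈ (⊥ : Subgroup G) := hS ▸ Subgroup.mem_top x
      have hy : y ∈ (⊥ : Subgroup G) := hS ▸ Subgroup.mem_top y
      rw [Subgroup.mem_bot] at hx hy
      exact hxy (hx.trans hy.symm)
    · exact h
  obtain ⟨c, hcT, hmax⟩ := finset_max hio T (hSne.mono (Finset.subset_union_left))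
  have hcp : r 1 c := by
    by_contra hcp
    have hc1 : rle r c 1 := rle_of_not_r hio hcp
    have hall1 : ∀ s ∈ S, s = 1 := by
      intro s hs
      obtain ⟨h1, h2'⟩ := hTmem s hs
      exact eq_one_of_le_one hio (rle_trans hio (hmax s h1) hc1)
        (rle_trans hio (hmax s⁻¹ h2') hc1)
    obtain ⟨x, y, hxy⟩ := hnt
    have hsub : (S : Set G) ⊆ ({1} : Set G) := by
      intro s hs
      simp [hall1 s hs]
    have : Subgroup.closure (S : Set G) ≤ ⊥ := by
      rw [← Subgroup.closure_singleton_one]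
      exact Subgroup.closure_mono hsub
    rw [hS] at this
    have hx : x ∈ (⊥ : Subgroup G) := this (Subgroup.mem_top x)
    have hy : y ∈ (⊥ : Subgroup G) := this (Subgroup.mem_top y)
    rw [Subgroup.mem_bot] at hx hy
    exact hxy (hx.trans hy.symm)
  -- every element is bounded above and below by powers of c
  have key : ∀ x : G, (∃ K : ℤ, r x (c ^ K)) ∧ (∃ J : ℤ, r (c ^ J) x) := by
    intro x
    have hx : x ∈ Subgroup.closure (S : Set G) := hS ▸ Subgroup.mem_top x
    induction hx using Subgroup.closure_induction with
    | mem s hs =>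
      obtain ⟨h1, h2'⟩ := hTmem s hs
      constructor
      · rcases hmax s h1 with h | h
        · exact ⟨1, by simpa using h⟩
        · refine ⟨2, ?_⟩
          rw [h]
          simpa using zpow_lt hio hcp (by norm_num : (1:ℤ) < 2)
      · have hsi : ∃ K : ℤ, r s⁻¹ (c ^ K) := by
          rcases hmax s⁻¹ h2' with h | h
          · exact ⟨1, by simpa using h⟩
          · refine ⟨2, ?_⟩
            rw [h]
            simpa using zpow_lt hio hcp (by norm_num : (1:ℤ) < 2)
        obtain ⟨K, hK⟩ := hsi
        obtain ⟨M, hM⟩ := flip1 hio h2 hcp hK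
        exact ⟨M, by simpa using hM⟩
    | one =>
      constructor
      · exact ⟨1, by simpa using hcp⟩
      · refine ⟨-1, ?_⟩
        have := (neg_inv_iff hio).mp hcp
        simpa [zpow_neg] using this
    | mul x y _ _ ihx ihy =>
      obtain ⟨⟨Kx, hKx⟩, ⟨Jx, hJx⟩⟩ := ihx
      obtain ⟨⟨Ky, hKy⟩, ⟨Jy, hJy⟩⟩ := ihy
      constructor
      · obtain ⟨K, hK⟩ := rb_mul hio h2 hcp (Or.inl hKx) (Or.inl hKy)
        exact ⟨K, hK⟩
      · -- lower bound for x * y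
        obtain ⟨n, hn, hrec⟩ := h2 (c ^ Jx) x c⁻¹ (-Jy).toNat hJx
        rw [inv_pow_int c n] at hrec
        have e1 : c ^ Jx * c ^ (-(n:ℤ)) = c ^ (Jx - n) := by rw [← zpow_add]; ring_nf
        rw [e1] at hrec
        have h3 : rle r (x * c ^ (-(n:ℤ))) (x * c ^ Jy) :=
          lmul_rle hio x (zpow_le hio hcp (by omega))
        have h4 : r (x * c ^ Jy) (x * y) := lmul hio x hJy
        exact ⟨Jx - n, rtrans hio (r_rle_trans hio hrec h3) h4⟩
    | inv x _ ihx =>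
      obtain ⟨⟨Kx, hKx⟩, ⟨Jx, hJx⟩⟩ := ihx
      constructor
      · obtain ⟨M, hM⟩ := flip2 hio h2 hcp hJx
        exact ⟨M, hM⟩
      · obtain ⟨M, hM⟩ := flip1 hio h2 hcp hKx
        exact ⟨M, hM⟩
  refine ⟨c, fun z => (key z).1, hcp⟩

end gen
section extra
variable (hio : IsLeftInvariantOrder r) (h2 : R2 r)
include hio h2

lemma posc_c_mul {c w : G} (hc : ¬ cof r c) (hw : posc r w) : posc r (c * w) := by
  constructor
  · by_contra hcc
    have h1 : ¬ cof r c⁻¹ := fun h => hc (by simpa using cof_inv h)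
    have h3 := not_cof_mul hio h2 h1 hcc
    rw [← mul_assoc, inv_mul_cancel, one_mul] at h3
    exact h3 hw.1
  · have h3 : r c⁻¹ w := lem_C_lt hio h2 hw.1 hw.2 (fun h => hc (by simpa using cof_inv h))
    have := lmul hio c h3
    rwa [mul_inv_cancel] at this

end extra

section quot
variable (hio : IsLeftInvariantOrder r) (h2 : R2 r)

/-- the induced relation on the quotient by the non-cofinal subgroup -/
def rQ (hio : IsLeftInvariantOrder r) (h2 : R2 r) (a b : G ⧸ Csub hio h2) : Prop :=
  ∃ w : G, QuotientGroup.mk w = a⁻¹ * b ∧ posc r w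

lemma mk_mul_mk (x y : G) :
    (QuotientGroup.mk x : G ⧸ Csub hio h2) * QuotientGroup.mk y = QuotientGroup.mk (x * y) :=
  rfl

lemma mk_inv (x : G) :
    (QuotientGroup.mk x : G ⧸ Csub hio h2)⁻¹ = QuotientGroup.mk x⁻¹ :=
  rfl

lemma mk_pow (x : G) (n : ℕ) :
    (QuotientGroup.mk x : G ⧸ Csub hio h2) ^ n = QuotientGroup.mk (x ^ n) :=
  ((QuotientGroup.mk' (Csub hio h2)).map_pow x n).symm

lemma mk_zpow (x : G) (n : ℤ) :
    (QuotientGroup.mk x : G ⧸ Csub hio h2) ^ n = QuotientGroup.mk (x ^ n) :=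
  ((QuotientGroup.mk' (Csub hio h2)).map_zpow x n).symm

lemma rQ_mk {x y : G} :
    rQ hio h2 (QuotientGroup.mk x) (QuotientGroup.mk y) ↔ posc r (x⁻¹ * y) := by
  constructor
  · rintro ⟨w, hw, hp⟩
    have he : (QuotientGroup.mk w : G ⧸ Csub hio h2) = QuotientGroup.mk (x⁻¹ * y) := by
      rw [hw, mk_inv, mk_mul_mk]
    have hmem : w⁻¹ * (x⁻¹ * y) ∈ Csub hio h2 := QuotientGroup.eq.mp he
    have hp2 := posc_mul_c hio h2 hp hmem
    rwa [← mul_assoc, mul_inv_cancel, one_mul] at hp2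
  · intro hp
    exact ⟨x⁻¹ * y, by rw [mk_inv, mk_mul_mk], hp⟩

lemma hioQ : IsLeftInvariantOrder (rQ hio h2) := by
  refine ⟨?_, ?_, ?_, ?_⟩
  · intro a h
    obtain ⟨x, rfl⟩ := QuotientGroup.mk_surjective a
    rw [rQ_mk hio h2, inv_mul_cancel] at h
    exact not_cof_one hio h.1
  · intro a b c hab hbc
    obtain ⟨x, rfl⟩ := QuotientGroup.mk_surjective a
    obtain ⟨y, rfl⟩ := QuotientGroup.mk_surjective b
    obtain ⟨z, rfl⟩ := QuotientGroup.mk_surjective c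
    rw [rQ_mk hio h2] at hab hbc ⊢
    have hm := posc_mul hio h2 hab hbc
    rwa [show (x⁻¹ * y) * (y⁻¹ * z) = x⁻¹ * z by group] at hm
  · intro a b hab
    obtain ⟨x, rfl⟩ := QuotientGroup.mk_surjective a
    obtain ⟨y, rfl⟩ := QuotientGroup.mk_surjective b
    have hw : cof r (x⁻¹ * y) := by
      by_contra hc
      exact hab (QuotientGroup.eq.mpr hc)
    have hne : (1 : G) ≠ x⁻¹ * y := by
      intro h
      exact not_cof_one hio (h ▸ hw)
    rcases rtot hio hne with h | h
    · exact Or.inl ((rQ_mk hio h2).mpr ⟨hw, h⟩)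
    · refine Or.inr ((rQ_mk hio h2).mpr ?_)
      rw [show y⁻¹ * x = (x⁻¹ * y)⁻¹ by group]
      exact ⟨cof_inv hw, (pos_inv_iff hio).mp h⟩
  · intro γ a b hab
    obtain ⟨g, rfl⟩ := QuotientGroup.mk_surjective γ
    obtain ⟨x, rfl⟩ := QuotientGroup.mk_surjective a
    obtain ⟨y, rfl⟩ := QuotientGroup.mk_surjective b
    rw [rQ_mk hio h2] at hab
    rw [mk_mul_mk, mk_mul_mk, rQ_mk hio h2]
    rwa [show (g * x)⁻¹ * (g * y) = x⁻¹ * y by group]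

lemma h2Q : R2 (rQ hio h2) := by
  intro a b γ N hab
  obtain ⟨x, rfl⟩ := QuotientGroup.mk_surjective a
  obtain ⟨y, rfl⟩ := QuotientGroup.mk_surjective b
  obtain ⟨g, rfl⟩ := QuotientGroup.mk_surjective γ
  rw [rQ_mk hio h2] at hab
  obtain ⟨n, hn, hrec⟩ := h2 1 (x⁻¹ * y) g N hab.2
  rw [one_mul] at hrec
  refine ⟨n, hn, ?_⟩
  rw [mk_pow, mk_mul_mk, mk_mul_mk, rQ_mk hio h2]
  rw [show (x * g ^ n)⁻¹ * (y * g ^ n) = (g ^ n)⁻¹ * (x⁻¹ * y) * g ^ n by group]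
  constructor
  · have hconj := cof_conj hio h2 hab.1 (g ^ n)⁻¹
    simpa using hconj
  · have hl := lmul hio (g ^ n)⁻¹ hrec
    rwa [inv_mul_cancel, ← mul_assoc] at hl

lemma harchQ : ∀ d : G ⧸ Csub hio h2, rQ hio h2 1 d → cof (rQ hio h2) d := by
  intro d hd z
  obtain ⟨x, rfl⟩ := QuotientGroup.mk_surjective d
  obtain ⟨zz, rfl⟩ := QuotientGroup.mk_surjective z
  have hx : posc r x := by
    have h0 : rQ hio h2 (QuotientGroup.mk 1) (QuotientGroup.mk x) := hd
    rw [rQ_mk hio h2] at h0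
    simpa using h0
  obtain ⟨m, hm⟩ := hx.1 zz
  by_cases hc : cof r (zz⁻¹ * x ^ m)
  · refine ⟨m, ?_⟩
    rw [mk_zpow, rQ_mk hio h2]
    exact ⟨hc, (r_iff_pos hio).mp hm⟩
  · refine ⟨m + 1, ?_⟩
    rw [mk_zpow, rQ_mk hio h2]
    rw [show zz⁻¹ * x ^ (m + 1) = (zz⁻¹ * x ^ m) * x by rw [zpow_add_one, mul_assoc]]
    exact posc_c_mul hio h2 hc hx

end quot
theorem mainG (hio : IsLeftInvariantOrder r) (h2 : R2 r) (hfg : Group.FG G)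
    (hnt : Nontrivial G) : ∃ φ : G →* Multiplicative ℤ, Function.Surjective φ := by
  obtain ⟨g, hg⟩ := exists_cofinal hio h2 hfg hnt
  have hgC : (QuotientGroup.mk g : G ⧸ Csub hio h2) ≠ 1 :=
    fun h => (QuotientGroup.eq_one_iff g).mp h hg.1
  haveI : Nontrivial (G ⧸ Csub hio h2) := ⟨⟨QuotientGroup.mk g, 1, hgC⟩⟩
  haveI : Group.FG G := hfg
  have hfgQ : Group.FG (G ⧸ Csub hio h2) :=
    Group.fg_of_surjective (QuotientGroup.mk'_surjective (Csub hio h2))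
  obtain ⟨φQ, hφQ⟩ := top_thm (hioQ hio h2) (h2Q hio h2) (harchQ hio h2) hfgQ ‹_›
  exact ⟨φQ.comp (QuotientGroup.mk' (Csub hio h2)),
    hφQ.comp (QuotientGroup.mk'_surjective (Csub hio h2))⟩

lemma R2_of_rec (hrec : IsRecurrentOrder r) : R2 r := by
  intro a b γ N hab
  have hchain : ∀ i j : Fin 2, i < j → r (![a, b] i) (![a, b] j) := by
    intro i j hij
    fin_cases i <;> fin_cases j <;>
      simp only [Matrix.cons_val_zero, Matrix.cons_val_one, Matrix.head_cons] <;>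
      first
        | exact hab
        | exact absurd hij (by norm_num)
  obtain ⟨n, hNn, _, hall⟩ := hrec γ 2 ![a, b] hchain N
  refine ⟨n, hNn, ?_⟩
  have := hall 0 1 (by norm_num)
  simpa using this

end RO

/-- A group admitting a left-invariant order that is recurrent for every cyclic
subgroup is locally indicable. -/
theorem recurrent_order_locallyIndicable {Γ : Type*} [Group Γ]
    (r : Γ → Γ → Prop) (hr : IsLeftInvariantOrder r) (hrec : IsRecurrentOrder r) :
    ∀ H : Subgroup Γ, H ≠ ⊥ → Group.FG H →
      ∃ φ : H →* Multiplicative ℤ, Function.Surjective φ := by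
  intro H hne hfg
  set rH : ↥H → ↥H → Prop := fun a b => r ↑a ↑b with hrH
  have hioH : IsLeftInvariantOrder rH := by
    refine ⟨fun a => hr.1 ↑a, fun a b c hab hbc => hr.2.1 _ _ _ hab hbc,
      fun a b hab => hr.2.2.1 _ _ (fun h => hab (Subtype.ext h)), fun γ a b hab => ?_⟩
    show r ↑(γ * a) ↑(γ * b)
    rw [Subgroup.coe_mul, Subgroup.coe_mul]
    exact hr.2.2.2 ↑γ ↑a ↑b hab
  have h2H : RO.R2 rH := by
    intro a b γ N hab
    obtain ⟨n, hNn, hrr⟩ := RO.R2_of_rec hrec ↑a ↑b ↑γ N hab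
    refine ⟨n, hNn, ?_⟩
    show r ↑(a * γ ^ n) ↑(b * γ ^ n)
    rw [Subgroup.coe_mul, Subgroup.coe_mul]
    push_cast
    exact hrr
  haveI hnt : Nontrivial ↥H := (Subgroup.nontrivial_iff_ne_bot H).mpr hne
  exact RO.mainG hioH h2H hfg hnt
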